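/- Let S ⊆ {0,1}^n be finite and nonempty, P = {x ∈ R^n : M x ≤ b} with M ∈ R^{m×n}, b ∈ R^m, and suppose conv(S ∩ P) = conv(S) ∩ P and S ∩ P ≠ ∅. Then for every v ∈ R^n there exists γ ∈ R^m_+ such that x̄ maximizes v^T x over S ∩ P if and only if: x̄ ∈ S ∩ P, (M x̄)_i = b_i for every i with γ_i > 0, and x̄ maximizes (v − M^T γ)^T x over S. -/

import Mathlib

set_option linter.unusedSectionVars false
set_option linter.unusedVariables false
set_option linter.deprecated false


open Finset

section ConeClosed

variable {E : Type*} [NormedAddCommGroup E] [NormedSpace ℝ E] [FiniteDimensional ℝ E]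
variable {ρ : Type*} [Fintype ρ]

lemma caratheodory_cone (g : ρ → E) :
    ∀ (k : ℕ) (c : ρ → ℝ), (Finset.univ.filter fun r => c r ≠ 0).card ≤ k → (∀ r, 0 ≤ c r) →
    ∃ (T : Finset ρ) (c' : ρ → ℝ), LinearIndependent ℝ (fun i : T => g i) ∧
      (∀ r, 0 ≤ c' r) ∧ (∀ r ∉ T, c' r = 0) ∧ ∑ r, c' r • g r = ∑ r, c r • g r := by
  classical
  intro k
  induction k with
  | zero =>
    intro c hcard hc
    have hall : ∀ r, c r = 0 := by
      intro r
      by_contra hr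
      have : r ∈ Finset.univ.filter fun r => c r ≠ 0 := by simp [hr]
      have := Finset.card_pos.mpr ⟨r, this⟩
      omega
    refine ⟨∅, c, ?_, hc, fun r _ => hall r, rfl⟩
    have : IsEmpty ((∅ : Finset ρ) : Type _) := by simp; exact ⟨fun x => x.2⟩
    exact linearIndependent_empty_type
  | succ k ih =>
    intro c hcard hc
    set T : Finset ρ := Finset.univ.filter fun r => c r ≠ 0 with hT
    by_cases hli : LinearIndependent ℝ (fun i : T => g i)
    · refine ⟨T, c, hli, hc, fun r hr => ?_, rfl⟩
      by_contra hcr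
      exact hr (by simp [hT, hcr])
    · rw [Fintype.linearIndependent_iff] at hli
      push_neg at hli
      obtain ⟨d0, hd0sum, i0, hi0⟩ := hli
      set dd : ρ → ℝ := fun r => if h : r ∈ T then d0 ⟨r, h⟩ else 0 with hdd
      have hddsupp : ∀ r, c r = 0 → dd r = 0 := by
        intro r hr
        have : r ∉ T := by simp [hT, hr]
        simp [hdd, this]
      have hddsum : ∑ r, dd r • g r = 0 := by
        rw [← Finset.sum_subset (Finset.subset_univ T)
          (fun r _ hr => by simp [hdd, hr])]
        rw [← Finset.sum_coe_sort T (fun r => dd r • g r)]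
        rw [← hd0sum]
        exact Finset.sum_congr rfl fun i _ => by simp [hdd, i.2]
      have hddne : dd (i0 : ρ) ≠ 0 := by simpa [hdd, i0.2] using hi0
      -- choose e with a positive entry
      obtain ⟨e, hesum, hesupp, r1, hr1⟩ :
          ∃ e : ρ → ℝ, (∑ r, e r • g r = 0) ∧ (∀ r, c r = 0 → e r = 0) ∧ ∃ r, 0 < e r := by
        rcases lt_or_gt_of_ne hddne with h | h
        · exact ⟨fun r => -dd r, by simpa [neg_smul] using congrArg Neg.neg hddsum,
            fun r hr => by simp [hddsupp r hr], ⟨i0, by simpa using h⟩⟩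
        · exact ⟨dd, hddsum, hddsupp, ⟨i0, h⟩⟩
      set Pos : Finset ρ := Finset.univ.filter fun r => 0 < e r with hPos
      have hPne : Pos.Nonempty := ⟨r1, by simp [hPos, hr1]⟩
      set t : ℝ := Pos.inf' hPne fun r => c r / e r with ht
      have ht0 : 0 ≤ t := by
        apply Finset.le_inf'
        intro r hr
        rw [hPos, Finset.mem_filter] at hr
        exact div_nonneg (hc r) hr.2.le
      set c' : ρ → ℝ := fun r => c r - t * e r with hc'def
      have hc' : ∀ r, 0 ≤ c' r := by
        intro r
        by_cases he : 0 < e r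
        · have hrP : r ∈ Pos := by simp [hPos, he]
          have := Finset.inf'_le (fun r => c r / e r) hrP
          rw [← ht] at this
          have : t * e r ≤ c r := by
            rw [← le_div_iff₀ he]; exact this
          simp [hc'def]; linarith
        · push_neg at he
          have : t * e r ≤ 0 := mul_nonpos_of_nonneg_of_nonpos ht0 he
          have := hc r
          simp [hc'def]; linarith
      have hsum' : ∑ r, c' r • g r = ∑ r, c r • g r := by
        simp only [hc'def, sub_smul, Finset.sum_sub_distrib, mul_smul]
        rw [← Finset.smul_sum, hesum, smul_zero, sub_zero]
      obtain ⟨r0, hr0P, hr0⟩ := Finset.exists_mem_eq_inf' hPne fun r => c r / e r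
      have her0 : 0 < e r0 := by
        rw [hPos, Finset.mem_filter] at hr0P; exact hr0P.2
      have hc'r0 : c' r0 = 0 := by
        simp only [hc'def, ht, hr0]
        field_simp
        simp
      have hcr0 : c r0 ≠ 0 := by
        intro h
        exact absurd (hesupp r0 h) (ne_of_gt her0)
      have hsubset : (Finset.univ.filter fun r => c' r ≠ 0) ⊆ T.erase r0 := by
        intro r hr
        rw [Finset.mem_filter] at hr
        rw [Finset.mem_erase]
        constructor
        · rintro rfl; exact hr.2 hc'r0
        · simp only [hT, Finset.mem_filter, Finset.mem_univ, true_and]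
          intro hcr
          exact hr.2 (by simp [hc'def, hcr, hesupp r hcr])
      have hcard' : (Finset.univ.filter fun r => c' r ≠ 0).card ≤ k := by
        have h1 := Finset.card_le_card hsubset
        have h2 : (T.erase r0).card < T.card := by
          apply Finset.card_erase_lt_of_mem
          simp [hT, hcr0]
        omega
      obtain ⟨T', c'', h1, h2, h3, h4⟩ := ih c' hcard' hc'
      exact ⟨T', c'', h1, h2, h3, h4.trans hsum'⟩

lemma cone_isClosed (g : ρ → E) :
    IsClosed {x : E | ∃ c : ρ → ℝ, (∀ r, 0 ≤ c r) ∧ ∑ r, c r • g r = x} := by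
  classical
  have heq : {x : E | ∃ c : ρ → ℝ, (∀ r, 0 ≤ c r) ∧ ∑ r, c r • g r = x}
      = ⋃ (T : Finset ρ) (_ : LinearIndependent ℝ (fun i : T => g i)),
          {x | ∃ c : ρ → ℝ, (∀ r, 0 ≤ c r) ∧ (∀ r ∉ T, c r = 0) ∧ ∑ r, c r • g r = x} := by
    ext x
    simp only [Set.mem_setOf_eq, Set.mem_iUnion]
    constructor
    · rintro ⟨c, hc, rfl⟩
      obtain ⟨T, c', hli, h1, h2, h3⟩ := caratheodory_cone g _ c le_rfl hc
      exact ⟨T, hli, c', h1, h2, h3⟩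
    · rintro ⟨T, _, c, hc, _, rfl⟩
      exact ⟨c, hc, rfl⟩
  rw [heq]
  refine isClosed_iUnion_of_finite fun T => isClosed_iUnion_of_finite fun hli => ?_
  set L : (T → ℝ) →ₗ[ℝ] E :=
    { toFun := fun c => ∑ i : T, c i • g i
      map_add' := by intro a b; simp [add_smul, Finset.sum_add_distrib]
      map_smul' := by intro t a; simp [smul_smul, Finset.smul_sum] } with hL
  have hker : LinearMap.ker L = ⊥ := by
    rw [LinearMap.ker_eq_bot']
    intro c hc
    funext i
    exact Fintype.linearIndependent_iff.mp hli c hc i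
  have himg : {x : E | ∃ c : ρ → ℝ, (∀ r, 0 ≤ c r) ∧ (∀ r ∉ T, c r = 0) ∧ ∑ r, c r • g r = x}
      = L '' {c : T → ℝ | ∀ i, 0 ≤ c i} := by
    ext x
    simp only [Set.mem_setOf_eq, Set.mem_image]
    constructor
    · rintro ⟨c, hc, hz, rfl⟩
      refine ⟨fun i => c i, fun i => hc i, ?_⟩
      simp only [hL, LinearMap.coe_mk, AddHom.coe_mk]
      change ∑ i : T, c i • g i = _
      rw [Finset.sum_coe_sort T (fun r => c r • g r)]
      exact Finset.sum_subset (Finset.subset_univ T) (fun r _ hr => by simp [hz r hr])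
    · rintro ⟨c, hc, rfl⟩
      refine ⟨fun r => if h : r ∈ T then c ⟨r, h⟩ else 0, ?_, ?_, ?_⟩
      · intro r; by_cases h : r ∈ T <;> simp [h, hc]
      · intro r hr; simp [hr]
      · simp only [hL, LinearMap.coe_mk, AddHom.coe_mk]
        rw [← Finset.sum_subset (Finset.subset_univ T) (fun r _ hr => by simp [hr])]
        rw [← Finset.sum_coe_sort T]
        exact Finset.sum_congr rfl fun i _ => by simp [i.2]
  rw [himg]
  apply (L.isClosedEmbedding_of_injective hker).isClosedMap
  have : {c : T → ℝ | ∀ i, 0 ≤ c i} = ⋂ i, (fun c : T → ℝ => c i) ⁻¹' Set.Ici 0 := by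
    ext c; simp [Set.mem_iInter]
  rw [this]
  exact isClosed_iInter fun i => isClosed_Ici.preimage (continuous_apply i)

end ConeClosed

open scoped RealInnerProductSpace

lemma farkas_aux {m : ℕ} {ι : Type*} [Fintype ι] [DecidableEq ι] (a : ι → Fin m → ℝ) (d : ι → ℝ)
    (H : ∀ μ : ι → ℝ, (∀ s, 0 ≤ μ s) → (∀ j, ∑ s, μ s * a s j ≤ 0) → ∑ s, μ s * d s ≤ 0) :
    ∃ γ : Fin m → ℝ, (∀ j, 0 ≤ γ j) ∧ ∀ s, d s ≤ ∑ j, γ j * a s j := by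
  classical
  let ε : (ι → ℝ) → EuclideanSpace ℝ ι := fun x => (WithLp.equiv 2 (ι → ℝ)).symm x
  have hε : ∀ (x : ι → ℝ) i, ε x i = x i := fun x i => rfl
  set g : (Fin m ⊕ ι) → EuclideanSpace ℝ ι :=
    Sum.elim (fun j => ε fun s => a s j) (fun s => -(EuclideanSpace.single s (1:ℝ))) with hg
  set C : Set (EuclideanSpace ℝ ι) := {x : EuclideanSpace ℝ ι | ∃ c : Fin m ⊕ ι → ℝ, (∀ r, 0 ≤ c r) ∧ ∑ r, c r • g r = x} with hC
  -- coordinates of members of C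
  have happly : ∀ (c : Fin m ⊕ ι → ℝ) (s : ι), (∑ r, c r • g r) s = ∑ r, c r * g r s := by
    intro c s
    rw [WithLp.ofLp_sum, Finset.sum_apply]
    rfl
  have key : ε d ∈ C := by
    by_contra hd
    set K : ConvexCone ℝ (EuclideanSpace ℝ ι) :=
      { carrier := C
        smul_mem' := by
          rintro t ht x ⟨c, hc, rfl⟩
          exact ⟨fun r => t * c r, fun r => mul_nonneg ht.le (hc r),
            by rw [Finset.smul_sum]; exact Finset.sum_congr rfl fun r _ => (smul_smul t (c r) (g r)).symm⟩
        add_mem' := by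
          rintro x ⟨c, hc, rfl⟩ y ⟨c', hc', rfl⟩
          exact ⟨fun r => c r + c' r, fun r => add_nonneg (hc r) (hc' r),
            by rw [← Finset.sum_add_distrib]; exact Finset.sum_congr rfl fun r _ => (add_smul _ _ _)⟩ } with hK
    have hKne : (K : Set (EuclideanSpace ℝ ι)).Nonempty := ⟨0, ⟨fun _ => 0, fun r => le_rfl, by simp⟩⟩
    have hKcl : IsClosed (K : Set (EuclideanSpace ℝ ι)) := cone_isClosed g
    let Kp : ProperCone ℝ (EuclideanSpace ℝ ι) :=
      { carrier := C
        add_mem' := fun ha hb => K.add_mem' ha hb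
        zero_mem' := ⟨fun _ => 0, fun r => le_rfl, by simp⟩
        smul_mem' := by
          rintro t x ⟨c, hc, rfl⟩
          exact ⟨fun r => (t : ℝ) * c r, fun r => mul_nonneg t.2 (hc r),
            by rw [show t • ∑ r, c r • g r = (t : ℝ) • ∑ r, c r • g r from rfl, Finset.smul_sum]; exact Finset.sum_congr rfl fun r _ => (smul_smul (t : ℝ) (c r) (g r)).symm⟩
        isClosed' := hKcl }
    obtain ⟨y, hy0, hyd⟩ := ProperCone.hyperplane_separation' Kp (x₀ := ε d) hd
    have hy : ∀ x ∈ C, 0 ≤ ⟪x, y⟫ := fun x hx => hy0 x hx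
    rw [real_inner_comm] at hyd
    have hgen : ∀ r, 0 ≤ ⟪g r, y⟫ := by
      intro r
      apply hy
      refine ⟨fun r' => if r' = r then 1 else 0, fun r' => by positivity, ?_⟩
      simp [ite_smul]
    have hyneg : ∀ s, y s ≤ 0 := by
      intro s
      have := hgen (Sum.inr s)
      simp only [hg, Sum.elim_inr, inner_neg_left] at this
      rw [EuclideanSpace.inner_single_left] at this
      simpa using this
    have hcol : ∀ j, ∑ s, (-y s) * a s j ≤ 0 := by
      intro j
      have := hgen (Sum.inl j)
      simp only [hg, Sum.elim_inl, PiLp.inner_apply, RCLike.inner_apply, conj_trivial] at this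
      have h2 : ∑ s, (-y s) * a s j = -∑ s, (fun s => a s j) s * y s := by
        rw [← Finset.sum_neg_distrib]
        exact Finset.sum_congr rfl fun s _ => by ring
      rw [h2]
      have h' : ∑ x, y x * (ε fun s => a s j) x = ∑ s, a s j * y s :=
        Finset.sum_congr rfl fun s _ => mul_comm _ _
      rw [h'] at this
      simpa using this
    have := H (fun s => -y s) (fun s => by simpa using hyneg s) hcol
    have h3 : ⟪y, ε d⟫ = ∑ s, y s * d s := by
      rw [PiLp.inner_apply]
      simp [RCLike.inner_apply, ε]
      exact Finset.sum_congr rfl fun s _ => mul_comm _ _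
    rw [h3] at hyd
    have : (0:ℝ) ≤ ∑ s, y s * d s := by
      have h4 : ∑ s, (-y s) * d s = -∑ s, y s * d s := by
        rw [← Finset.sum_neg_distrib]; exact Finset.sum_congr rfl fun s _ => by ring
      linarith [h4 ▸ this]
    linarith
  obtain ⟨c, hc, hsum⟩ := key
  refine ⟨fun j => c (Sum.inl j), fun j => hc _, fun s => ?_⟩
  have h5 := congrArg (fun x : EuclideanSpace ℝ ι => x s) hsum
  dsimp only at h5
  rw [happly] at h5
  rw [Fintype.sum_sum_type] at h5
  have h6 : ∀ s' : ι, c (Sum.inr s') * g (Sum.inr s') s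
      = -(if s = s' then c (Sum.inr s') else 0) := by
    intro s'
    simp only [hg, Sum.elim_inr]
    by_cases h : s = s' <;> simp [EuclideanSpace.single_apply, h, eq_comm]
  rw [Finset.sum_congr rfl fun s' _ => h6 s'] at h5
  rw [Finset.sum_neg_distrib, Finset.sum_ite_eq] at h5
  simp only [Finset.mem_univ, if_true] at h5
  have h7 : ∀ j, c (Sum.inl j) * g (Sum.inl j) s = c (Sum.inl j) * a s j := by
    intro j; rfl
  rw [Finset.sum_congr rfl fun j _ => h7 j] at h5
  rw [show ε d s = d s from rfl] at h5
  have := hc (Sum.inr s)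
  linarith

open Matrix


theorem stmt_17 (n m : ℕ) (S : Set (Fin n → ℝ)) (hSfin : S.Finite)
    (hS01 : ∀ x ∈ S, ∀ i, x i = 0 ∨ x i = 1)
    (M : Matrix (Fin m) (Fin n) ℝ) (b : Fin m → ℝ)
    (P : Set (Fin n → ℝ)) (hP : P = {x | ∀ i, (M *ᵥ x) i ≤ b i})
    (hconv : convexHull ℝ (S ∩ P) = convexHull ℝ S ∩ P)
    (hne : (S ∩ P).Nonempty) :
    ∀ v : Fin n → ℝ, ∃ γ : Fin m → ℝ, (∀ i, 0 ≤ γ i) ∧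
      ∀ xb : Fin n → ℝ,
        (xb ∈ S ∩ P ∧ ∀ y ∈ S ∩ P, ∑ i, v i * y i ≤ ∑ i, v i * xb i) ↔
        (xb ∈ S ∩ P ∧ (∀ i, 0 < γ i → (M *ᵥ xb) i = b i) ∧
          ∀ y ∈ S, ∑ i, (v i - (γ ᵥ* M) i) * y i ≤ ∑ i, (v i - (γ ᵥ* M) i) * xb i) := by
  classical
  intro v
  have hSPfin : (S ∩ P).Finite := hSfin.inter_of_left P
  obtain ⟨x0, hx0mem, hx0max⟩ : ∃ x0 ∈ S ∩ P, ∀ y ∈ S ∩ P,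
      ∑ i, v i * y i ≤ ∑ i, v i * x0 i := by
    obtain ⟨x0, h1, h2⟩ := hSPfin.toFinset.exists_max_image (fun x => ∑ i, v i * x i)
      (by rwa [Set.Finite.toFinset_nonempty])
    exact ⟨x0, hSPfin.mem_toFinset.mp h1, fun y hy => h2 y (hSPfin.mem_toFinset.mpr hy)⟩
  set c0 : ℝ := ∑ i, v i * x0 i with hc0
  have hfeas : ∀ y ∈ P, ∀ j, (M *ᵥ y) j ≤ b j := by
    intro y hy j; rw [hP] at hy; exact hy j
  have hmulvec : ∀ (y : Fin n → ℝ) j, (M *ᵥ y) j = ∑ i, M j i * y i := by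
    intro y j; simp [Matrix.mulVec, dotProduct]
  -- Farkas hypothesis
  have Hyp : ∀ μ : ↥hSfin.toFinset → ℝ, (∀ s, 0 ≤ μ s) →
      (∀ j, ∑ s, μ s * ((M *ᵥ (s : Fin n → ℝ)) j - b j) ≤ 0) →
      ∑ s, μ s * ((∑ i, v i * (s : Fin n → ℝ) i) - c0) ≤ 0 := by
    intro μ hμ hcol
    by_cases hT : ∑ s, μ s = 0
    · have hall : ∀ s ∈ Finset.univ, μ s = 0 := fun s _ =>
        (Finset.sum_eq_zero_iff_of_nonneg (fun s _ => hμ s)).mp hT s (Finset.mem_univ s)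
      rw [Finset.sum_congr rfl fun s hs => by rw [hall s hs, zero_mul]]
      simp
    · set T := ∑ s, μ s with hTdef
      have hTpos : 0 < T :=
        lt_of_le_of_ne (Finset.sum_nonneg fun s _ => hμ s) (Ne.symm hT)
      set x : Fin n → ℝ := T⁻¹ • ∑ s, μ s • (s : Fin n → ℝ) with hx
      have hxcoord : ∀ i, x i = T⁻¹ * ∑ s, μ s * (s : Fin n → ℝ) i := by
        intro i
        simp [hx, Finset.sum_apply, Pi.smul_apply, smul_eq_mul]
      have hswap : ∀ w : Fin n → ℝ,
          ∑ i, w i * x i = T⁻¹ * ∑ s, μ s * ∑ i, w i * (s : Fin n → ℝ) i := by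
        intro w
        calc ∑ i, w i * x i = ∑ i, ∑ s, T⁻¹ * (μ s * (w i * (s : Fin n → ℝ) i)) := by
              refine Finset.sum_congr rfl fun i _ => ?_
              rw [hxcoord i, Finset.mul_sum, Finset.mul_sum]
              exact Finset.sum_congr rfl fun s _ => by ring
          _ = ∑ s, ∑ i, T⁻¹ * (μ s * (w i * (s : Fin n → ℝ) i)) := Finset.sum_comm
          _ = T⁻¹ * ∑ s, μ s * ∑ i, w i * (s : Fin n → ℝ) i := by
              rw [Finset.mul_sum]
              exact Finset.sum_congr rfl fun s _ => by rw [Finset.mul_sum, Finset.mul_sum]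
      have hxhull : x ∈ convexHull ℝ S := by
        have := Finset.centerMass_mem_convexHull (t := (Finset.univ : Finset ↥hSfin.toFinset))
          (w := μ) (z := fun s => (s : Fin n → ℝ)) (fun s _ => hμ s) hTpos
          (fun s _ => hSfin.mem_toFinset.mp s.2)
        rwa [Finset.centerMass] at this
      have hxP : x ∈ P := by
        rw [hP]
        intro j
        have h1 : ∑ s, μ s * (M *ᵥ (s : Fin n → ℝ)) j ≤ T * b j := by
          have h2 : ∑ s, μ s * ((M *ᵥ (s : Fin n → ℝ)) j - b j)
              = ∑ s, μ s * (M *ᵥ (s : Fin n → ℝ)) j - T * b j := by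
            rw [hTdef, Finset.sum_mul, ← Finset.sum_sub_distrib]
            exact Finset.sum_congr rfl fun s _ => by ring
          have := hcol j
          linarith [h2 ▸ this]
        have h3 : (M *ᵥ x) j = T⁻¹ * ∑ s, μ s * (M *ᵥ (s : Fin n → ℝ)) j := by
          rw [hmulvec x j, hswap (fun i => M j i)]
          exact congrArg _ (Finset.sum_congr rfl fun s _ => by rw [hmulvec])
        rw [h3]
        calc T⁻¹ * ∑ s, μ s * (M *ᵥ (s : Fin n → ℝ)) j ≤ T⁻¹ * (T * b j) :=
              mul_le_mul_of_nonneg_left h1 (inv_nonneg.mpr hTpos.le)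
          _ = b j := by field_simp
      have hvx : ∑ i, v i * x i ≤ c0 := by
        have hxin : x ∈ convexHull ℝ (S ∩ P) := by
          rw [hconv]; exact ⟨hxhull, hxP⟩
        have hlin : IsLinearMap ℝ (fun z : Fin n → ℝ => ∑ i, v i * z i) := by
          constructor
          · intro a b'; simp [mul_add, Finset.sum_add_distrib]
          · intro t a
            simp only [Pi.smul_apply, smul_eq_mul, Finset.mul_sum]
            exact Finset.sum_congr rfl fun i _ => by ring
        have hhalf : convexHull ℝ (S ∩ P) ⊆ {z | ∑ i, v i * z i ≤ c0} :=
          convexHull_min (fun z hz => hx0max z hz) (convex_halfSpace_le hlin c0)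
        exact hhalf hxin
      -- conclude
      have h4 : ∑ s, μ s * ((∑ i, v i * (s : Fin n → ℝ) i) - c0)
          = (∑ s, μ s * ∑ i, v i * (s : Fin n → ℝ) i) - T * c0 := by
        rw [hTdef, Finset.sum_mul, ← Finset.sum_sub_distrib]
        exact Finset.sum_congr rfl fun s _ => by ring
      rw [h4]
      rw [hswap v] at hvx
      have h5 : ∑ s, μ s * ∑ i, v i * (s : Fin n → ℝ) i ≤ T * c0 := by
        have := mul_le_mul_of_nonneg_left hvx hTpos.le
        rwa [← mul_assoc, mul_inv_cancel₀ (ne_of_gt hTpos), one_mul] at this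
      linarith
  obtain ⟨γ, hγ0, hγkey⟩ := farkas_aux (ι := ↥hSfin.toFinset)
    (fun s j => (M *ᵥ (s : Fin n → ℝ)) j - b j)
    (fun s => (∑ i, v i * (s : Fin n → ℝ) i) - c0) Hyp
  refine ⟨γ, hγ0, ?_⟩
  -- rewrite of the reduced objective
  have hsplit : ∀ z : Fin n → ℝ, ∑ i, (v i - (γ ᵥ* M) i) * z i
      = (∑ i, v i * z i) - ∑ j, γ j * (M *ᵥ z) j := by
    intro z
    have h1 : ∑ i, (γ ᵥ* M) i * z i = ∑ j, γ j * (M *ᵥ z) j := by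
      simp only [Matrix.vecMul, Matrix.mulVec, dotProduct, Finset.sum_mul, Finset.mul_sum]
      rw [Finset.sum_comm]
      exact Finset.sum_congr rfl fun j _ =>
        Finset.sum_congr rfl fun i _ => by ring
    simp only [sub_mul, Finset.sum_sub_distrib, h1]
  -- key inequality from Farkas
  have key : ∀ y ∈ S, ∑ i, (v i - (γ ᵥ* M) i) * y i ≤ c0 - ∑ j, γ j * b j := by
    intro y hy
    have := hγkey ⟨y, hSfin.mem_toFinset.mpr hy⟩
    simp only at this
    have h2 : ∑ j, γ j * ((M *ᵥ y) j - b j)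
        = ∑ j, γ j * (M *ᵥ y) j - ∑ j, γ j * b j := by
      rw [← Finset.sum_sub_distrib]
      exact Finset.sum_congr rfl fun j _ => by ring
    have h3 := Finset.sum_congr rfl fun (j : Fin m) (_ : j ∈ Finset.univ) =>
      (rfl : γ j * ((M *ᵥ y) j - b j) = γ j * ((M *ᵥ y) j - b j))
    rw [hsplit y]
    -- this : v·y - c0 ≤ ∑ j, γ j * ((M *ᵥ y) j - b j)
    have h4 : ∑ i, v i * y i - c0 ≤ ∑ j, γ j * (M *ᵥ y) j - ∑ j, γ j * b j := by
      rw [← h2]; exact this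
    linarith
  -- helper: for feasible points, γ·(My) ≤ γ·b
  have hgMle : ∀ y ∈ P, ∑ j, γ j * (M *ᵥ y) j ≤ ∑ j, γ j * b j := by
    intro y hy
    exact Finset.sum_le_sum fun j _ => mul_le_mul_of_nonneg_left (hfeas y hy j) (hγ0 j)
  -- for optimal points: γ·(Mxb) = γ·b
  have hopt_eq : ∀ xb ∈ S ∩ P, ∑ i, v i * xb i = c0 →
      ∑ j, γ j * (M *ᵥ xb) j = ∑ j, γ j * b j := by
    intro xb hxb hval
    have h1 := key xb hxb.1
    rw [hsplit xb, hval] at h1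
    have h2 := hgMle xb hxb.2
    linarith
  intro xb
  constructor
  · rintro ⟨hmem, hopt⟩
    have hval : ∑ i, v i * xb i = c0 :=
      le_antisymm (hx0max xb hmem) (hopt x0 hx0mem)
    have heq := hopt_eq xb hmem hval
    refine ⟨hmem, ?_, ?_⟩
    · -- tightness
      intro j hj
      have hz : ∑ j, γ j * (b j - (M *ᵥ xb) j) = 0 := by
        have : ∑ j, γ j * (b j - (M *ᵥ xb) j)
            = ∑ j, γ j * b j - ∑ j, γ j * (M *ᵥ xb) j := by
          rw [← Finset.sum_sub_distrib]
          exact Finset.sum_congr rfl fun j _ => by ring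
        rw [this, heq, sub_self]
      have hterm := (Finset.sum_eq_zero_iff_of_nonneg
        (fun j _ => mul_nonneg (hγ0 j) (by linarith [hfeas xb hmem.2 j]))).mp hz j
        (Finset.mem_univ j)
      rcases mul_eq_zero.mp hterm with h | h
      · exact absurd h (ne_of_gt hj)
      · linarith [hfeas xb hmem.2 j]
    · intro y hy
      calc ∑ i, (v i - (γ ᵥ* M) i) * y i ≤ c0 - ∑ j, γ j * b j := key y hy
        _ = ∑ i, v i * xb i - ∑ j, γ j * (M *ᵥ xb) j := by rw [hval, heq]
        _ = ∑ i, (v i - (γ ᵥ* M) i) * xb i := (hsplit xb).symm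
  · rintro ⟨hmem, htight, hred⟩
    refine ⟨hmem, ?_⟩
    have heq : ∑ j, γ j * (M *ᵥ xb) j = ∑ j, γ j * b j := by
      refine Finset.sum_congr rfl fun j _ => ?_
      rcases (hγ0 j).lt_or_eq with h | h
      · rw [htight j h]
      · rw [← h, zero_mul, zero_mul]
    intro y hy
    have h1 := hred y hy.1
    rw [hsplit y, hsplit xb, heq] at h1
    have h2 := hgMle y hy.2
    linarith
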